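/- Let G be a loopless mixed graph with directed, bidirected, and undirected edges that contains no partially directed cycle. Define a relation on the undirected-connected components of G by B ⪯ B' if there is a partially directed walk from some vertex of B to some vertex of B'. Then ⪯ is a partial order on the set of undirected-connected components. -/

import Mathlib

/-- A loopless mixed graph with directed, bidirected, and undirected edges. -/
structure MixedGraph (V : Type*) where
  dir : V → V → Prop
  bi : V → V → Prop
  undir : V → V → Prop
  bi_symm : ∀ u v, bi u v → bi v u
  undir_symm : ∀ u v, undir u v → undir v u
  dir_loopless : ∀ v, ¬ dir v v
  bi_loopless : ∀ v, ¬ bi v v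
  undir_loopless : ∀ v, ¬ undir v v

namespace MixedGraph

variable {V : Type*} (G : MixedGraph V)

/-- One step of a partially directed walk: an undirected edge or a directed edge pointing
forwards. -/
def pdStep (u v : V) : Prop := G.undir u v ∨ G.dir u v

/-- Existence of a partially directed walk from `u` to `v`. -/
def pdReach (u v : V) : Prop := Relation.ReflTransGen G.pdStep u v

/-- `G` has a partially directed cycle: a partially directed walk from some vertex to
itself containing at least one directed edge. -/
def HasPDCycle : Prop :=
  ∃ u a b : V, G.pdReach u a ∧ G.dir a b ∧ G.pdReach b u

/-- The equivalence relation 'joined by a walk of undirected edges', whose classes are the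
undirected-connected components. -/
def undirSetoid : Setoid V where
  r u v := Relation.ReflTransGen G.undir u v
  iseqv := by
    refine ⟨fun _ => Relation.ReflTransGen.refl, ?_, fun h h' => h.trans h'⟩
    intro u v h
    induction h with
    | refl => exact Relation.ReflTransGen.refl
    | tail _ hstep ih =>
        exact Relation.ReflTransGen.trans
          (Relation.ReflTransGen.single (G.undir_symm _ _ hstep)) ih

/-- The reachability relation `B ⪯ B'` on undirected-connected components: some vertex of
`B` has a partially directed walk to some vertex of `B'`. -/
def compLE : Quotient G.undirSetoid → Quotient G.undirSetoid → Prop :=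
  fun B B' => ∃ u v : V, Quotient.mk G.undirSetoid u = B ∧
    Quotient.mk G.undirSetoid v = B' ∧ G.pdReach u v

end MixedGraph

private lemma undir_pdReach {V : Type*} (G : MixedGraph V) {u v : V}
    (h : Relation.ReflTransGen G.undir u v) : G.pdReach u v :=
  Relation.ReflTransGen.mono (fun _ _ h => Or.inl h) _ _ h

private lemma pd_split {V : Type*} (G : MixedGraph V) {u v : V} (h : G.pdReach u v) :
    Relation.ReflTransGen G.undir u v ∨
      ∃ a b, G.pdReach u a ∧ G.dir a b ∧ G.pdReach b v := by
  induction h with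
  | refl => exact Or.inl Relation.ReflTransGen.refl
  | @tail x y hxy hstep ih =>
    rcases ih with hud | ⟨a, b, h1, h2, h3⟩
    · rcases hstep with hs | hs
      · exact Or.inl (hud.tail hs)
      · exact Or.inr ⟨x, y, undir_pdReach G hud, hs, Relation.ReflTransGen.refl⟩
    · exact Or.inr ⟨a, b, h1, h2, h3.tail hstep⟩

/-- In a loopless mixed graph with no partially directed cycle, the reachability relation
`⪯` on undirected-connected components is a partial order. -/
theorem compLE_isPartialOrder {V : Type*} (G : MixedGraph V) (hnc : ¬ G.HasPDCycle) :
    IsPartialOrder (Quotient G.undirSetoid) G.compLE := by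
  refine { refl := ?_, trans := ?_, antisymm := ?_ }
  · intro B
    induction B using Quotient.inductionOn with
    | h u => exact ⟨u, u, rfl, rfl, Relation.ReflTransGen.refl⟩
  · rintro B B' B'' ⟨u, v, hu, hv, huv⟩ ⟨v', w, hv', hw, hvw⟩
    have hvv' : Relation.ReflTransGen G.undir v v' := Quotient.exact (hv.trans hv'.symm)
    exact ⟨u, w, hu, hw, (huv.trans (undir_pdReach G hvv')).trans hvw⟩
  · rintro B B' ⟨u, v, hu, hv, huv⟩ ⟨v', u', hv', hu', hvu⟩
    have hvv' : Relation.ReflTransGen G.undir v v' := Quotient.exact (hv.trans hv'.symm)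
    have huu' : Relation.ReflTransGen G.undir u' u := Quotient.exact (hu'.trans hu.symm)
    have hback : G.pdReach v u :=
      (undir_pdReach G hvv').trans (hvu.trans (undir_pdReach G huu'))
    rcases pd_split G huv with hud | ⟨a, b, h1, h2, h3⟩
    · rw [← hu, ← hv]
      exact Quotient.sound hud
    · exact absurd ⟨u, a, b, h1, h2, h3.trans hback⟩ hnc
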